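/- Let X be an HLUR Banach space. Then for every x ∈ S_X, the faces S(X,x*,0) and S(X,y*,0) coincide for all x*, y* ∈ J(x), where J(x) = {y* ∈ S_{X*} : y*(x) = 1}. -/
import Mathlib


open Metric Filter Topology NormedSpace

noncomputable section

/-- The face `S(X, f, 0) = {y ∈ B_X : f(y) = 1}` determined by a functional `f`. -/
def face (X : Type*) [NormedAddCommGroup X] [NormedSpace ℝ X] (f : X →L[ℝ] ℝ) : Set X :=
  {y | ‖y‖ ≤ 1 ∧ f y = 1}

/-- Property (HS). -/
def HSProp (X : Type*) [NormedAddCommGroup X] [NormedSpace ℝ X] : Prop :=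
  ∀ f : X →L[ℝ] ℝ, ‖f‖ = 1 → (face X f).Nonempty →
    ∀ xs : ℕ → X, (∀ n, ‖xs n‖ ≤ 1) →
      Tendsto (fun n => f (xs n)) atTop (𝓝 1) →
      Tendsto (fun n => infDist (xs n) (face X f)) atTop (𝓝 0)

/-- Property (HLUR). -/
def HLUR (X : Type*) [NormedAddCommGroup X] [NormedSpace ℝ X] : Prop :=
  ∀ x : X, ‖x‖ = 1 → ∀ xs : ℕ → X, (∀ n, ‖xs n‖ = 1) →
    Tendsto (fun n => ‖xs n + x‖) atTop (𝓝 2) →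
    ∀ f : X →L[ℝ] ℝ, ‖f‖ = 1 → f x = 1 →
      Tendsto (fun n => infDist (xs n) (face X f)) atTop (𝓝 0)

/-- Local uniform rotundity. -/
def LUR (X : Type*) [NormedAddCommGroup X] [NormedSpace ℝ X] : Prop :=
  ∀ x : X, ‖x‖ = 1 → ∀ xs : ℕ → X, (∀ n, ‖xs n‖ = 1) →
    Tendsto (fun n => ‖xs n + x‖) atTop (𝓝 2) → Tendsto xs atTop (𝓝 x)

/-- Compact local uniform rotundity. -/
def CLUR (X : Type*) [NormedAddCommGroup X] [NormedSpace ℝ X] : Prop :=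
  ∀ x : X, ‖x‖ = 1 → ∀ xs : ℕ → X, (∀ n, ‖xs n‖ = 1) →
    Tendsto (fun n => ‖xs n + x‖) atTop (𝓝 2) →
    ∃ φ : ℕ → ℕ, StrictMono φ ∧ ∃ z : X, Tendsto (xs ∘ φ) atTop (𝓝 z)

/-- Local U-convexity. -/
def LocallyUConvex (X : Type*) [NormedAddCommGroup X] [NormedSpace ℝ X] : Prop :=
  ∀ x : X, ‖x‖ = 1 → ∀ xs : ℕ → X, (∀ n, ‖xs n‖ = 1) →
    Tendsto (fun n => ‖xs n + x‖) atTop (𝓝 2) →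
    ∃ f : X →L[ℝ] ℝ, ‖f‖ = 1 ∧ f x = 1 ∧ Tendsto (fun n => f (xs n)) atTop (𝓝 1)

/-- Strong local U-convexity. -/
def StronglyLocallyUConvex (X : Type*) [NormedAddCommGroup X] [NormedSpace ℝ X] : Prop :=
  ∀ x : X, ‖x‖ = 1 → ∀ xs : ℕ → X, (∀ n, ‖xs n‖ = 1) →
    Tendsto (fun n => ‖xs n + x‖) atTop (𝓝 2) →
    ∀ f : X →L[ℝ] ℝ, ‖f‖ = 1 → f x = 1 → Tendsto (fun n => f (xs n)) atTop (𝓝 1)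

/-- Rotundity (strict convexity): every face has at most one element. -/
def Rotund (X : Type*) [NormedAddCommGroup X] [NormedSpace ℝ X] : Prop :=
  ∀ f : X →L[ℝ] ℝ, ‖f‖ = 1 → (face X f).Subsingleton

/-- Near strict convexity: every face is norm-compact. -/
def NSC (X : Type*) [NormedAddCommGroup X] [NormedSpace ℝ X] : Prop :=
  ∀ f : X →L[ℝ] ℝ, ‖f‖ = 1 → IsCompact (face X f)

/-- Kadets-Klee property. -/
def KadetsKlee (X : Type*) [NormedAddCommGroup X] [NormedSpace ℝ X] : Prop :=
  ∀ (xs : ℕ → X) (x : X),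
    (∀ f : X →L[ℝ] ℝ, Tendsto (fun n => f (xs n)) atTop (𝓝 (f x))) →
    Tendsto (fun n => ‖xs n‖) atTop (𝓝 ‖x‖) → Tendsto xs atTop (𝓝 x)

/-- Alternatively convex or smooth. -/
def ACS (X : Type*) [NormedAddCommGroup X] [NormedSpace ℝ X] : Prop :=
  ∀ x y : X, ‖x‖ = 1 → ‖y‖ = 1 → ∀ f : X →L[ℝ] ℝ, ‖f‖ = 1 →
    ‖x + y‖ = 2 → f x = 1 → f y = 1

/-- Smoothness: each unit vector has a unique norming functional. -/
def SmoothSpace (X : Type*) [NormedAddCommGroup X] [NormedSpace ℝ X] : Prop :=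
  ∀ x : X, ‖x‖ = 1 → ∃! f : X →L[ℝ] ℝ, ‖f‖ = 1 ∧ f x = 1

/-- Reflexivity of a normed space. -/
def ReflexiveSpace (X : Type*) [NormedAddCommGroup X] [NormedSpace ℝ X] : Prop :=
  Function.Surjective (inclusionInDoubleDual ℝ X)

/-- Strong rotundity: reflexive, rotund and Kadets-Klee. -/
def StronglyRotund (X : Type*) [NormedAddCommGroup X] [NormedSpace ℝ X] : Prop :=
  ReflexiveSpace X ∧ Rotund X ∧ KadetsKlee X

theorem hlur_faces_coincide (X : Type*) [NormedAddCommGroup X] [NormedSpace ℝ X]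
    [CompleteSpace X] (hX : HLUR X) :
    ∀ x : X, ‖x‖ = 1 → ∀ f g : X →L[ℝ] ℝ, ‖f‖ = 1 → f x = 1 → ‖g‖ = 1 → g x = 1 →
      face X f = face X g := by
  have closed_face : ∀ h : X →L[ℝ] ℝ, IsClosed (face X h) := fun h =>
    (isClosed_le continuous_norm continuous_const).inter
      (isClosed_eq h.continuous continuous_const)
  have key : ∀ x : X, ‖x‖ = 1 → ∀ f g : X →L[ℝ] ℝ, ‖f‖ = 1 → f x = 1 → ‖g‖ = 1 → g x = 1 →
      face X f ⊆ face X g := by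
    intro x hx f g hf hfx hg hgx y hy
    obtain ⟨hy1, hfy⟩ := hy
    have hny : ‖y‖ = 1 := by
      refine le_antisymm hy1 ?_
      calc (1 : ℝ) = f y := hfy.symm
        _ ≤ ‖f y‖ := le_abs_self _
        _ ≤ ‖f‖ * ‖y‖ := f.le_opNorm y
        _ = ‖y‖ := by rw [hf, one_mul]
    have hsum : ‖y + x‖ = 2 := by
      refine le_antisymm ?_ ?_
      · calc ‖y + x‖ ≤ ‖y‖ + ‖x‖ := norm_add_le _ _
          _ = 2 := by rw [hny, hx]; norm_num
      · calc (2 : ℝ) = f (y + x) := by rw [map_add, hfy, hfx]; norm_num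
          _ ≤ ‖f (y + x)‖ := le_abs_self _
          _ ≤ ‖f‖ * ‖y + x‖ := f.le_opNorm _
          _ = ‖y + x‖ := by rw [hf, one_mul]
    have := hX x hx (fun _ => y) (fun _ => hny)
      (by simpa [hsum] using (tendsto_const_nhds : Tendsto (fun _ : ℕ => (2:ℝ)) atTop (𝓝 2)))
      g hg hgx
    have hzero : infDist y (face X g) = 0 :=
      tendsto_nhds_unique tendsto_const_nhds this
    have hne : (face X g).Nonempty := ⟨x, le_of_eq hx, hgx⟩
    exact ((closed_face g).mem_iff_infDist_zero hne).mpr hzero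
  intro x hx f g hf hfx hg hgx
  exact le_antisymm (key x hx f g hf hfx hg hgx) (key x hx g f hg hgx hf hfx)
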